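/- Let X and Y be real-valued random variables on a probability space with |X| ≤ C₁ and |Y| ≤ C₂ almost surely, where X is measurable with respect to a σ-field 𝒜 and Y with respect to a σ-field ℬ. If α := sup{|P(A ∩ B) − P(A)P(B)| : A ∈ 𝒜, B ∈ ℬ} satisfies α ≤ ε, then |E(XY) − E(X)E(Y)| ≤ 4 C₁ C₂ ε. -/

import Mathlib

open MeasureTheory

open Filter
open scoped Classical

section aux

variable {Ω : Type*} [m : MeasurableSpace Ω] {μ : Measure Ω}

lemma integrable_of_bdd [IsFiniteMeasure μ] {f : Ω → ℝ} (hf : AEStronglyMeasurable f μ)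
    {c : ℝ} (hb : ∀ᵐ ω ∂μ, |f ω| ≤ c) : Integrable f μ :=
  (integrable_const c).mono' hf (by simpa [Real.norm_eq_abs] using hb)

/-- Key step: reduce covariance with a bounded `𝒞`-measurable factor to covariance with a
`±1`-valued `𝒞`-measurable sign function. -/
lemma cov_step (μ : Measure Ω) [IsProbabilityMeasure μ]
    {𝒞 : MeasurableSpace Ω} (h𝒞 : 𝒞 ≤ m) {f g : Ω → ℝ} {c : ℝ}
    (hf : Measurable[𝒞] f) (hfb : ∀ᵐ ω ∂μ, |f ω| ≤ c)
    (hg : Integrable g μ) (hfg : Integrable (fun ω => f ω * g ω) μ) :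
    ∃ S : Set Ω, MeasurableSet[𝒞] S ∧
      |(∫ ω, f ω * g ω ∂μ) - (∫ ω, f ω ∂μ) * ∫ ω, g ω ∂μ| ≤
        c * ((∫ ω, (if ω ∈ S then (1:ℝ) else -1) * g ω ∂μ) -
          (∫ ω, (if ω ∈ S then (1:ℝ) else -1) ∂μ) * ∫ ω, g ω ∂μ) := by
  have hne : (ae μ).NeBot := ae_neBot.2 (IsProbabilityMeasure.ne_zero μ)
  obtain ⟨ω₀, hω₀⟩ := hfb.exists
  have hc : 0 ≤ c := (abs_nonneg _).trans hω₀
  set G : Ω → ℝ := μ[g|𝒞] with hG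
  set I : ℝ := ∫ ω, g ω ∂μ with hI
  set d : Ω → ℝ := fun ω => G ω - I with hd
  have hGsm : StronglyMeasurable[𝒞] G := stronglyMeasurable_condExp
  set S : Set Ω := {ω | 0 ≤ d ω} with hS
  have hSmeas : MeasurableSet[𝒞] S := by
    have : Measurable[𝒞] d := (hGsm.measurable).sub measurable_const
    exact measurableSet_le measurable_const this
  set h : Ω → ℝ := fun ω => if ω ∈ S then (1:ℝ) else -1 with hh
  have hhmeas : Measurable[𝒞] h := Measurable.ite hSmeas measurable_const measurable_const
  have hhb : ∀ ω, |h ω| ≤ 1 := by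
    intro ω; by_cases hω : ω ∈ S <;> simp [hh, hω]
  -- pull-out property for f and for h
  have hfbn : ∀ᵐ ω ∂μ, ‖f ω‖ ≤ c := by simpa [Real.norm_eq_abs] using hfb
  have pull_f : (∫ ω, f ω * g ω ∂μ) = ∫ ω, f ω * G ω ∂μ := by
    have h1 : μ[(fun ω => f ω * g ω)|𝒞] =ᵐ[μ] fun ω => f ω * G ω :=
      condExp_stronglyMeasurable_mul_of_bound h𝒞 hf.stronglyMeasurable hg c hfbn
    calc (∫ ω, f ω * g ω ∂μ) = ∫ ω, (μ[(fun ω => f ω * g ω)|𝒞]) ω ∂μ :=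
          (integral_condExp h𝒞).symm
      _ = ∫ ω, f ω * G ω ∂μ := integral_congr_ae h1
  have hhg : Integrable (fun ω => h ω * g ω) μ :=
    hg.bdd_mul ((hhmeas.mono h𝒞 le_rfl).aestronglyMeasurable)
      (Eventually.of_forall (by simpa [Real.norm_eq_abs] using hhb))
  have pull_h : (∫ ω, h ω * g ω ∂μ) = ∫ ω, h ω * G ω ∂μ := by
    have h1 : μ[(fun ω => h ω * g ω)|𝒞] =ᵐ[μ] fun ω => h ω * G ω :=
      condExp_stronglyMeasurable_mul_of_bound h𝒞 hhmeas.stronglyMeasurable hg 1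
        (Eventually.of_forall (by simpa [Real.norm_eq_abs] using hhb))
    calc (∫ ω, h ω * g ω ∂μ) = ∫ ω, (μ[(fun ω => h ω * g ω)|𝒞]) ω ∂μ :=
          (integral_condExp h𝒞).symm
      _ = ∫ ω, h ω * G ω ∂μ := integral_congr_ae h1
  -- integrability facts
  have hfint : Integrable f μ :=
    (integrable_const c).mono' ((hf.mono h𝒞 le_rfl).aestronglyMeasurable)
      (by simpa [Real.norm_eq_abs] using hfb)
  have hGint : Integrable G μ := integrable_condExp
  have hfG : Integrable (fun ω => f ω * G ω) μ :=
    hGint.bdd_mul ((hf.mono h𝒞 le_rfl).aestronglyMeasurable) hfbn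
  have hhG : Integrable (fun ω => h ω * G ω) μ :=
    hGint.bdd_mul ((hhmeas.mono h𝒞 le_rfl).aestronglyMeasurable)
      (Eventually.of_forall (by simpa [Real.norm_eq_abs] using hhb))
  have hIG : (∫ ω, G ω ∂μ) = I := integral_condExp h𝒞
  -- covariance of f and g equals ∫ f * d
  have cov_f : (∫ ω, f ω * g ω ∂μ) - (∫ ω, f ω ∂μ) * I = ∫ ω, f ω * d ω ∂μ := by
    have : (∫ ω, f ω * d ω ∂μ) = (∫ ω, f ω * G ω ∂μ) - (∫ ω, f ω ∂μ) * I := by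
      simp only [hd, mul_sub]
      rw [integral_sub hfG (hfint.mul_const I), integral_mul_const]
    rw [this, pull_f]
  have hhint : Integrable h μ :=
    (integrable_const (1:ℝ)).mono' ((hhmeas.mono h𝒞 le_rfl).aestronglyMeasurable)
      (Eventually.of_forall (by simpa [Real.norm_eq_abs] using hhb))
  have cov_h : (∫ ω, h ω * g ω ∂μ) - (∫ ω, h ω ∂μ) * I = ∫ ω, h ω * d ω ∂μ := by
    have : (∫ ω, h ω * d ω ∂μ) = (∫ ω, h ω * G ω ∂μ) - (∫ ω, h ω ∂μ) * I := by
      simp only [hd, mul_sub]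
      rw [integral_sub hhG (hhint.mul_const I), integral_mul_const]
    rw [this, pull_h]
  -- h * d = |d|
  have habs : ∀ ω, h ω * d ω = |d ω| := by
    intro ω
    by_cases hω : ω ∈ S
    · have h0 : 0 ≤ d ω := by simpa [hS] using hω
      simp [hh, hω, abs_of_nonneg h0]
    · have : d ω < 0 := lt_of_not_ge (by simpa [hS] using hω)
      simp [hh, hω, abs_of_neg this]
  have hdint : Integrable d μ := hGint.sub (integrable_const I)
  refine ⟨S, hSmeas, ?_⟩
  rw [cov_f, cov_h]
  have hfd : Integrable (fun ω => f ω * d ω) μ :=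
    hdint.bdd_mul ((hf.mono h𝒞 le_rfl).aestronglyMeasurable) hfbn
  calc |∫ ω, f ω * d ω ∂μ| ≤ ∫ ω, |f ω * d ω| ∂μ := by
        simpa only [Real.norm_eq_abs] using norm_integral_le_integral_norm (μ := μ) (fun ω => f ω * d ω)
    _ ≤ ∫ ω, c * |d ω| ∂μ := by
        refine integral_mono_ae hfd.abs (hdint.abs.const_mul c) ?_
        filter_upwards [hfb] with ω hω
        rw [abs_mul]
        exact mul_le_mul_of_nonneg_right hω (abs_nonneg _)
    _ = c * ∫ ω, |d ω| ∂μ := integral_const_mul c _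
    _ = c * ∫ ω, h ω * d ω ∂μ := by
        congr 1; exact integral_congr_ae (Eventually.of_forall fun ω => (habs ω).symm)

lemma integral_sign (μ : Measure Ω) [IsProbabilityMeasure μ] {A : Set Ω}
    (hA : MeasurableSet A) :
    (∫ ω, (if ω ∈ A then (1:ℝ) else -1) ∂μ) = 2 * (μ A).toReal - 1 := by
  have heq : (fun ω => if ω ∈ A then (1:ℝ) else -1)
      = fun ω => 2 * A.indicator (1 : Ω → ℝ) ω - 1 := by
    funext ω; by_cases hω : ω ∈ A <;> simp [hω] <;> norm_num
  have iA : Integrable (fun ω => 2 * A.indicator (1 : Ω → ℝ) ω) μ :=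
    ((integrable_const (1:ℝ)).indicator hA).const_mul 2
  have e1 : ∫ ω, (2 * A.indicator (1 : Ω → ℝ) ω - 1) ∂μ
      = (∫ ω, 2 * A.indicator (1 : Ω → ℝ) ω ∂μ) - ∫ _ω, (1:ℝ) ∂μ :=
    integral_sub iA (integrable_const 1)
  have e2 : (∫ ω, 2 * A.indicator (1 : Ω → ℝ) ω ∂μ)
      = 2 * ∫ ω, A.indicator (1 : Ω → ℝ) ω ∂μ := integral_const_mul 2 _
  rw [heq, e1, e2, integral_indicator_one hA]
  simp [measureReal_def]

lemma integral_sign_mul (μ : Measure Ω) [IsProbabilityMeasure μ] {A B : Set Ω}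
    (hA : MeasurableSet A) (hB : MeasurableSet B) :
    (∫ ω, (if ω ∈ B then (1:ℝ) else -1) * (if ω ∈ A then (1:ℝ) else -1) ∂μ)
      = 4 * (μ (B ∩ A)).toReal - 2 * (μ B).toReal - 2 * (μ A).toReal + 1 := by
  have heq : (fun ω => (if ω ∈ B then (1:ℝ) else -1) * (if ω ∈ A then (1:ℝ) else -1))
      = fun ω => 4 * (B ∩ A).indicator (1 : Ω → ℝ) ω
          - 2 * B.indicator (1 : Ω → ℝ) ω - 2 * A.indicator (1 : Ω → ℝ) ω + 1 := by
    funext ω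
    by_cases h1 : ω ∈ B <;> by_cases h2 : ω ∈ A <;>
      simp [h1, h2, Set.indicator_apply, Set.mem_inter_iff] <;> norm_num
  have iBA : Integrable (fun ω => 4 * (B ∩ A).indicator (1 : Ω → ℝ) ω) μ :=
    ((integrable_const (1:ℝ)).indicator (hB.inter hA)).const_mul 4
  have iB : Integrable (fun ω => 2 * B.indicator (1 : Ω → ℝ) ω) μ :=
    ((integrable_const (1:ℝ)).indicator hB).const_mul 2
  have iA : Integrable (fun ω => 2 * A.indicator (1 : Ω → ℝ) ω) μ :=
    ((integrable_const (1:ℝ)).indicator hA).const_mul 2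
  have i1 : Integrable (fun ω => 4 * (B ∩ A).indicator (1 : Ω → ℝ) ω
      - 2 * B.indicator (1 : Ω → ℝ) ω) μ := iBA.sub iB
  have i2 : Integrable (fun ω => 4 * (B ∩ A).indicator (1 : Ω → ℝ) ω
      - 2 * B.indicator (1 : Ω → ℝ) ω - 2 * A.indicator (1 : Ω → ℝ) ω) μ := i1.sub iA
  have e0 : ∫ ω, (4 * (B ∩ A).indicator (1 : Ω → ℝ) ω - 2 * B.indicator (1 : Ω → ℝ) ω
        - 2 * A.indicator (1 : Ω → ℝ) ω + 1) ∂μ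
      = (∫ ω, (4 * (B ∩ A).indicator (1 : Ω → ℝ) ω - 2 * B.indicator (1 : Ω → ℝ) ω
        - 2 * A.indicator (1 : Ω → ℝ) ω) ∂μ) + ∫ _ω, (1:ℝ) ∂μ :=
    integral_add i2 (integrable_const 1)
  have e1 : ∫ ω, (4 * (B ∩ A).indicator (1 : Ω → ℝ) ω - 2 * B.indicator (1 : Ω → ℝ) ω
        - 2 * A.indicator (1 : Ω → ℝ) ω) ∂μ
      = (∫ ω, (4 * (B ∩ A).indicator (1 : Ω → ℝ) ω - 2 * B.indicator (1 : Ω → ℝ) ω) ∂μ)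
        - ∫ ω, 2 * A.indicator (1 : Ω → ℝ) ω ∂μ := integral_sub i1 iA
  have e2 : ∫ ω, (4 * (B ∩ A).indicator (1 : Ω → ℝ) ω - 2 * B.indicator (1 : Ω → ℝ) ω) ∂μ
      = (∫ ω, 4 * (B ∩ A).indicator (1 : Ω → ℝ) ω ∂μ)
        - ∫ ω, 2 * B.indicator (1 : Ω → ℝ) ω ∂μ := integral_sub iBA iB
  rw [heq, e0, e1, e2, integral_const_mul, integral_const_mul, integral_const_mul,
    integral_indicator_one (hB.inter hA), integral_indicator_one hB, integral_indicator_one hA]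
  simp [measureReal_def]

end aux

/-- Covariance inequality for bounded strongly mixing random variables:
if `|X| ≤ C₁`, `|Y| ≤ C₂` a.s., `X` is `𝒜`-measurable, `Y` is `ℬ`-measurable, and the
strong mixing coefficient between `𝒜` and `ℬ` is at most `ε`, then
`|E(XY) − E(X)E(Y)| ≤ 4 C₁ C₂ ε`. -/
theorem covariance_bound_mixing
    {Ω : Type*} [m : MeasurableSpace Ω] (μ : Measure Ω) [IsProbabilityMeasure μ]
    (𝒜 ℬ : MeasurableSpace Ω) (h𝒜 : 𝒜 ≤ m) (hℬ : ℬ ≤ m)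
    (X Y : Ω → ℝ) (hX : Measurable[𝒜] X) (hY : Measurable[ℬ] Y)
    (C₁ C₂ ε : ℝ)
    (hXb : ∀ᵐ ω ∂μ, |X ω| ≤ C₁) (hYb : ∀ᵐ ω ∂μ, |Y ω| ≤ C₂)
    (hmix : ∀ A B : Set Ω, MeasurableSet[𝒜] A → MeasurableSet[ℬ] B →
      |(μ (A ∩ B)).toReal - (μ A).toReal * (μ B).toReal| ≤ ε) :
    |(∫ ω, X ω * Y ω ∂μ) - (∫ ω, X ω ∂μ) * (∫ ω, Y ω ∂μ)| ≤ 4 * C₁ * C₂ * ε := by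
  have hne : (ae μ).NeBot := ae_neBot.2 (IsProbabilityMeasure.ne_zero μ)
  obtain ⟨ω₁, hω₁⟩ := hXb.exists
  obtain ⟨ω₂, hω₂⟩ := hYb.exists
  have hC₁ : 0 ≤ C₁ := (abs_nonneg _).trans hω₁
  have hC₂ : 0 ≤ C₂ := (abs_nonneg _).trans hω₂
  have hε : 0 ≤ ε := by simpa using hmix ∅ ∅ (@MeasurableSet.empty _ 𝒜) (@MeasurableSet.empty _ ℬ)
  have hXm : Measurable[m] X := hX.mono h𝒜 le_rfl
  have hYm : Measurable[m] Y := hY.mono hℬ le_rfl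
  have hYint : Integrable Y μ :=
    (integrable_const C₂).mono' hYm.aestronglyMeasurable
      (by simpa [Real.norm_eq_abs] using hYb)
  have hXY : Integrable (fun ω => X ω * Y ω) μ := by
    refine (integrable_const (C₁ * C₂)).mono' (hXm.mul hYm).aestronglyMeasurable ?_
    filter_upwards [hXb, hYb] with ω h1 h2
    simp only [Real.norm_eq_abs, abs_mul]
    exact mul_le_mul h1 h2 (abs_nonneg _) hC₁
  obtain ⟨A, hA, h1⟩ := cov_step (m := m) μ h𝒜 hX hXb hYint hXY
  set hA' : Ω → ℝ := fun ω => if ω ∈ A then (1:ℝ) else -1 with hhA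
  have hAm : Measurable[m] hA' := Measurable.ite (h𝒜 A hA) measurable_const measurable_const
  have hAb : ∀ ω, |hA' ω| ≤ 1 := by
    intro ω; by_cases hω : ω ∈ A <;> simp [hhA, hω]
  have hAint : Integrable hA' μ :=
    (integrable_const (1:ℝ)).mono' hAm.aestronglyMeasurable
      (Eventually.of_forall (by simpa [Real.norm_eq_abs] using hAb))
  have hYA : Integrable (fun ω => Y ω * hA' ω) μ := by
    refine (integrable_const C₂).mono' (hYm.mul hAm).aestronglyMeasurable ?_
    filter_upwards [hYb] with ω h2
    simp only [Real.norm_eq_abs, abs_mul]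
    calc |Y ω| * |hA' ω| ≤ C₂ * 1 := mul_le_mul h2 (hAb ω) (abs_nonneg _) hC₂
      _ = C₂ := mul_one _
  obtain ⟨B, hB, h2⟩ := cov_step (m := m) μ hℬ hY hYb hAint hYA
  set hB' : Ω → ℝ := fun ω => if ω ∈ B then (1:ℝ) else -1 with hhB
  -- compute the covariance of the two sign functions
  have hAmeas : MeasurableSet[m] A := h𝒜 A hA
  have hBmeas : MeasurableSet[m] B := hℬ B hB
  have intA : (∫ ω, hA' ω ∂μ) = 2 * (μ A).toReal - 1 := integral_sign (m := m) μ hAmeas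
  have intB : (∫ ω, hB' ω ∂μ) = 2 * (μ B).toReal - 1 := integral_sign (m := m) μ hBmeas
  have intBA : (∫ ω, hB' ω * hA' ω ∂μ) =
      4 * (μ (B ∩ A)).toReal - 2 * (μ B).toReal - 2 * (μ A).toReal + 1 :=
    integral_sign_mul (m := m) μ hAmeas hBmeas
  have hT : (∫ ω, hB' ω * hA' ω ∂μ) - (∫ ω, hB' ω ∂μ) * ∫ ω, hA' ω ∂μ =
      4 * ((μ (B ∩ A)).toReal - (μ B).toReal * (μ A).toReal) := by
    rw [intBA, intA, intB]; ring
  have hTle : (∫ ω, hB' ω * hA' ω ∂μ) - (∫ ω, hB' ω ∂μ) * ∫ ω, hA' ω ∂μ ≤ 4 * ε := by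
    rw [hT]
    have := hmix A B hA hB
    rw [Set.inter_comm A B] at this
    have h4 : |(μ (B ∩ A)).toReal - (μ A).toReal * (μ B).toReal| ≤ ε := this
    calc 4 * ((μ (B ∩ A)).toReal - (μ B).toReal * (μ A).toReal)
        ≤ 4 * |(μ (B ∩ A)).toReal - (μ B).toReal * (μ A).toReal| := by
          have := le_abs_self ((μ (B ∩ A)).toReal - (μ B).toReal * (μ A).toReal)
          linarith
      _ ≤ 4 * ε := by
          rw [mul_comm (μ B).toReal]
          linarith
  -- chain the bounds
  have hswap : (∫ ω, hA' ω * Y ω ∂μ) - (∫ ω, hA' ω ∂μ) * ∫ ω, Y ω ∂μ =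
      (∫ ω, Y ω * hA' ω ∂μ) - (∫ ω, Y ω ∂μ) * ∫ ω, hA' ω ∂μ := by
    simp_rw [mul_comm]
  calc |(∫ ω, X ω * Y ω ∂μ) - (∫ ω, X ω ∂μ) * (∫ ω, Y ω ∂μ)|
      ≤ C₁ * ((∫ ω, hA' ω * Y ω ∂μ) - (∫ ω, hA' ω ∂μ) * ∫ ω, Y ω ∂μ) := h1
    _ ≤ C₁ * |(∫ ω, Y ω * hA' ω ∂μ) - (∫ ω, Y ω ∂μ) * ∫ ω, hA' ω ∂μ| := by
        rw [hswap]
        exact mul_le_mul_of_nonneg_left (le_abs_self _) hC₁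
    _ ≤ C₁ * (C₂ * ((∫ ω, hB' ω * hA' ω ∂μ) - (∫ ω, hB' ω ∂μ) * ∫ ω, hA' ω ∂μ)) :=
        mul_le_mul_of_nonneg_left h2 hC₁
    _ ≤ C₁ * (C₂ * (4 * ε)) := by
        refine mul_le_mul_of_nonneg_left (mul_le_mul_of_nonneg_left hTle hC₂) hC₁
    _ = 4 * C₁ * C₂ * ε := by ring
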